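/- Let Λ be an r × r symmetric positive definite matrix with Cholesky factor L (lower triangular, positive diagonal, Λ = LL^T), and let dΛ be any symmetric r × r matrix (a differential of Λ). With A = L^{−1}(dΛ)L^{−T}, the half-vectorization of k(A) = Ā − (1/2)dg(A) satisfies vec(k(A)) = (1/2) E_r^T D_r^T (L^{−1} ⊗ L^{−1}) vec(dΛ), where E_r is the r(r+1)/2 × r² elimination matrix (E_r vec(A) = v(A)), D_r is the r² × r(r+1)/2 duplication matrix (D_r v(A) = vec(A) for symmetric A), and ⊗ is the Kronecker product. -/
import Mathlib


open Matrix Kronecker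

/-- Index set of the lower-triangular positions of an `r × r` matrix
(the index set of the half-vectorization `v(·)`). -/
abbrev LTIdx (r : ℕ) := {q : Fin r × Fin r // q.2 ≤ q.1}

/-- Column-stacking vectorization `vec(A)`, indexed by pairs `(column, row)`. -/
def vecm {r : ℕ} (A : Matrix (Fin r) (Fin r) ℝ) : Fin r × Fin r → ℝ := fun q => A q.2 q.1

/-- Lower-triangular truncation `Ā` of a square matrix. -/
def ltri {r : ℕ} (A : Matrix (Fin r) (Fin r) ℝ) : Matrix (Fin r) (Fin r) ℝ :=
  fun i j => if j ≤ i then A i j else 0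

/-- `k(A) = Ā − (1/2) dg(A)`. -/
noncomputable def kfun {r : ℕ} (A : Matrix (Fin r) (Fin r) ℝ) : Matrix (Fin r) (Fin r) ℝ :=
  ltri A - (1 / 2 : ℝ) • Matrix.diagonal (fun i => A i i)

/-- The elimination matrix `E_r` with `E_r vec(A) = v(A)`. -/
def Em (r : ℕ) : Matrix (LTIdx r) (Fin r × Fin r) ℝ :=
  fun q p => if p = (q.1.2, q.1.1) then 1 else 0

/-- The duplication matrix `D_r` with `D_r v(A) = vec(A)` for symmetric `A`. -/
def Dm (r : ℕ) : Matrix (Fin r × Fin r) (LTIdx r) ℝ :=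
  fun p q => if q.1 = (p.2, p.1) ∨ q.1 = (p.1, p.2) then 1 else 0

lemma sum_ite_or {α : Type*} [Fintype α] [DecidableEq α] (a b : α) (f : α → ℝ) (hab : a ≠ b) :
    ∑ x, (if x = a ∨ x = b then f x else 0) = f a + f b := by
  have h : ∀ x, (if x = a ∨ x = b then f x else 0)
      = (if x = a then f x else 0) + (if x = b then f x else 0) := by
    intro x
    by_cases ha : x = a <;> by_cases hb : x = b <;> simp_all
  simp [h, Finset.sum_add_distrib]

/-- **Half-vectorized form of the Cholesky differential.** For `Λ` symmetric positive
definite with Cholesky factor `L` and any symmetric differential `dΛ`, with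
`A = L⁻¹ (dΛ) L⁻ᵀ` one has `vec(k(A)) = (1/2) E_rᵀ D_rᵀ (L⁻¹ ⊗ L⁻¹) vec(dΛ)`. -/
theorem vec_kfun_cholesky_differential
    (r : ℕ)
    (Λ : Matrix (Fin r) (Fin r) ℝ) (hΛ : Λ.PosDef)
    (L : Matrix (Fin r) (Fin r) ℝ)
    (hLlow : ∀ i j : Fin r, i < j → L i j = 0)
    (hLdiag : ∀ i : Fin r, 0 < L i i)
    (hchol : L * Lᵀ = Λ)
    (dΛ : Matrix (Fin r) (Fin r) ℝ) (hdΛ : dΛᵀ = dΛ) :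
    vecm (kfun (L⁻¹ * dΛ * (L⁻¹)ᵀ))
      = (1 / 2 : ℝ) • (((Em r)ᵀ * (Dm r)ᵀ * (L⁻¹ ⊗ₖ L⁻¹)) *ᵥ vecm dΛ) := by
  set B := L⁻¹ with hB
  set A := B * dΛ * Bᵀ with hAdef
  -- A is symmetric
  have hA : ∀ i j, A i j = A j i := by
    intro i j
    have : Aᵀ = A := by
      rw [hAdef, transpose_mul, transpose_mul, transpose_transpose, hdΛ, mul_assoc]
    simpa using congrFun (congrFun this.symm i) j
  -- step 1 : (B ⊗ B) vec dΛ = vec A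
  have h1 : (B ⊗ₖ B) *ᵥ vecm dΛ = vecm A := by
    funext p
    obtain ⟨j, i⟩ := p
    simp only [Matrix.mulVec, dotProduct, vecm, hAdef, Matrix.mul_apply,
      Matrix.kroneckerMap_apply, Fintype.sum_prod_type, Matrix.transpose_apply,
      Finset.sum_mul]
    refine Finset.sum_congr rfl fun l _ => ?_
    refine Finset.sum_congr rfl fun k _ => ?_
    ring
  rw [← Matrix.mulVec_mulVec, h1, ← Matrix.mulVec_mulVec]
  funext p
  obtain ⟨c, ρ⟩ := p
  simp only [Pi.smul_apply, smul_eq_mul]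
  by_cases hcρ : c ≤ ρ
  · -- the Eᵀ sum collapses to q0 = ⟨(ρ, c), hcρ⟩
    have hE : ((Em r)ᵀ *ᵥ ((Dm r)ᵀ *ᵥ vecm A)) (c, ρ)
        = ((Dm r)ᵀ *ᵥ vecm A) ⟨(ρ, c), hcρ⟩ := by
      simp only [Matrix.mulVec, dotProduct, Matrix.transpose_apply, Em, ite_mul, one_mul,
        zero_mul]
      rw [Finset.sum_eq_single (⟨(ρ, c), hcρ⟩ : LTIdx r)]
      · simp
      · intro q _ hq
        rw [if_neg]
        intro h
        injection h with h1 h2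
        exact hq (Subtype.ext (Prod.ext h2.symm h1.symm))
      · intro h; exact absurd (Finset.mem_univ _) h
    rw [hE]
    -- now compute the Dᵀ sum
    simp only [Matrix.mulVec, dotProduct, Matrix.transpose_apply, Dm]
    have hcond : ∀ p : Fin r × Fin r,
        (((ρ, c) = (p.2, p.1) ∨ (ρ, c) = (p.1, p.2))) ↔ (p = (c, ρ) ∨ p = (ρ, c)) := by
      intro p
      constructor
      · rintro (h | h) <;> injection h with h1 h2 <;>
          [exact Or.inl (Prod.ext h2.symm h1.symm); exact Or.inr (Prod.ext h1.symm h2.symm)]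
      · rintro (rfl | rfl) <;> simp
    simp only [ite_mul, one_mul, zero_mul]
    rw [Finset.sum_congr rfl fun p _ => by rw [if_congr (hcond p) rfl rfl]]
    by_cases hd : c = ρ
    · subst hd
      simp only [or_self]
      rw [Finset.sum_ite_eq' Finset.univ ((c, c) : Fin r × Fin r) (fun p => vecm A p)]
      simp [vecm, kfun, ltri, Matrix.diagonal]
      ring
    · rw [sum_ite_or _ _ _ (by simp [Prod.ext_iff]; tauto)]
      have hlt : c < ρ := lt_of_le_of_ne hcρ hd
      simp only [vecm, kfun, ltri, Matrix.sub_apply, Matrix.smul_apply,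
        Matrix.diagonal_apply, if_pos hcρ, smul_eq_mul]
      rw [if_neg (by exact fun h => hd h.symm)]
      rw [hA ρ c]
      ring
  · -- strictly upper part : both sides vanish
    have hz : ((Em r)ᵀ *ᵥ ((Dm r)ᵀ *ᵥ vecm A)) (c, ρ) = 0 := by
      simp only [Matrix.mulVec, dotProduct, Matrix.transpose_apply, Em, ite_mul, one_mul,
        zero_mul]
      apply Finset.sum_eq_zero
      intro q _
      rw [if_neg]
      intro h
      injection h with h1 h2
      exact hcρ (h1 ▸ h2 ▸ q.2)
    rw [hz]
    simp [vecm, kfun, ltri, Matrix.diagonal_apply, hcρ, show ρ ≠ c from fun h => hcρ h.ge]
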